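/- Let n be a positive integer, let Ŵ ∈ ℝ^{n×n} be symmetric positive definite, and let w_e ∈ ℝⁿ. Then the terminal wrench w_L(χ) := −χ Ŵ (Iₙ + χ Ŵ)⁻¹ w_e converges to −w_e as χ → ∞. -/

import Mathlib

open Matrix Filter

lemma aux_posdef {n : ℕ} {W : Matrix (Fin n) (Fin n) ℝ}
    (hsymm : Wᵀ = W) (hpd : ∀ x : Fin n → ℝ, x ≠ 0 → 0 < x ⬝ᵥ W.mulVec x)
    {c : ℝ} (hc : 0 ≤ c) : (c • (1 : Matrix (Fin n) (Fin n) ℝ) + W).PosDef := by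
  rw [Matrix.posDef_iff_dotProduct_mulVec]
  constructor
  · show (c • (1 : Matrix (Fin n) (Fin n) ℝ) + W)ᴴ = _
    rw [Matrix.conjTranspose, Matrix.transpose_add, Matrix.transpose_smul, Matrix.transpose_one, hsymm]
    ext i j
    simp
  · intro x hx
    have h1 : (c • (1 : Matrix (Fin n) (Fin n) ℝ) + W) *ᵥ x = c • x + W *ᵥ x := by
      rw [Matrix.add_mulVec, Matrix.smul_mulVec, Matrix.one_mulVec]
    rw [star_trivial, h1, dotProduct_add, dotProduct_smul]
    have h2 : (0:ℝ) ≤ x ⬝ᵥ x := Finset.sum_nonneg fun i _ => mul_self_nonneg _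
    have := hpd x hx
    have : 0 ≤ c * (x ⬝ᵥ x) := mul_nonneg hc h2
    simp only [smul_eq_mul]
    linarith [hpd x hx]


/-- For symmetric positive definite `Ŵ` the terminal wrench
`w_L(χ) = −χ Ŵ (Iₙ + χ Ŵ)⁻¹ w_e` converges to `−w_e` as `χ → ∞`. -/
theorem stmt_13 (n : ℕ) (hn : 0 < n) (W : Matrix (Fin n) (Fin n) ℝ)
    (hsymm : Wᵀ = W) (hpd : ∀ x : Fin n → ℝ, x ≠ 0 → 0 < x ⬝ᵥ W.mulVec x)
    (we : Fin n → ℝ) :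
    Tendsto
      (fun χ : ℝ =>
        (-χ) • W.mulVec ((((1 : Matrix (Fin n) (Fin n) ℝ) + χ • W)⁻¹).mulVec we))
      atTop (nhds (-we)) := by

  have hW : W.PosDef := by
    have := aux_posdef hsymm hpd (le_refl (0:ℝ))
    simpa using this
  -- g t = (t • 1 + W)⁻¹, continuous at 0
  set g : ℝ → Matrix (Fin n) (Fin n) ℝ := fun t => (t • (1 : Matrix (Fin n) (Fin n) ℝ) + W)⁻¹
    with hg_def
  have hdet : W.det ≠ 0 := hW.det_pos.ne'
  have hginv : ContinuousAt Inv.inv ((0:ℝ) • (1 : Matrix (Fin n) (Fin n) ℝ) + W) := by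
    apply continuousAt_matrix_inv
    have : ((0:ℝ) • (1 : Matrix (Fin n) (Fin n) ℝ) + W).det = W.det := by simp
    rw [this]
    have : (Ring.inverse : ℝ → ℝ) = Inv.inv := by
      funext x; exact Ring.inverse_eq_inv x
    rw [this]
    exact continuousAt_inv₀ hdet
  have hf : ContinuousAt (fun t : ℝ => t • (1 : Matrix (Fin n) (Fin n) ℝ) + W) 0 :=
    ((continuous_id.smul continuous_const).add continuous_const).continuousAt
  have hgc : ContinuousAt g 0 :=
    ContinuousAt.comp (x := (0:ℝ)) (g := Inv.inv)
      (f := fun t : ℝ => t • (1 : Matrix (Fin n) (Fin n) ℝ) + W) hginv hf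
  -- t • g t → 0 as t → 0
  have h0 : Tendsto (fun t : ℝ => t • g t) (nhds 0) (nhds 0) := by
    have : ContinuousAt (fun t : ℝ => t • g t) 0 := continuousAt_id.smul hgc
    have h := this.tendsto
    simpa using h
  -- eventually: (1 + χ • W)⁻¹ = χ⁻¹ • g χ⁻¹
  have hev : ∀ᶠ χ : ℝ in atTop, ((1 : Matrix (Fin n) (Fin n) ℝ) + χ • W)⁻¹ = χ⁻¹ • g χ⁻¹ := by
    filter_upwards [eventually_gt_atTop (0:ℝ)] with χ hχ
    have hA : (χ⁻¹ • (1 : Matrix (Fin n) (Fin n) ℝ) + W).PosDef :=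
      aux_posdef hsymm hpd (le_of_lt (inv_pos.mpr hχ))
    have hfac : (1 : Matrix (Fin n) (Fin n) ℝ) + χ • W
        = χ • (χ⁻¹ • (1 : Matrix (Fin n) (Fin n) ℝ) + W) := by
      rw [smul_add, smul_smul, mul_inv_cancel₀ hχ.ne', one_smul]
    have hBdet : IsUnit (χ⁻¹ • (1 : Matrix (Fin n) (Fin n) ℝ) + W).det :=
      (Matrix.isUnit_iff_isUnit_det _).mp hA.isUnit
    rw [hfac]
    apply Matrix.inv_eq_right_inv
    show χ • (χ⁻¹ • (1 : Matrix (Fin n) (Fin n) ℝ) + W) *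
        (χ⁻¹ • (χ⁻¹ • (1 : Matrix (Fin n) (Fin n) ℝ) + W)⁻¹) = 1
    rw [Matrix.smul_mul, Matrix.mul_smul, smul_smul, mul_inv_cancel₀ hχ.ne', one_smul,
      Matrix.mul_nonsing_inv _ hBdet]
  have hinv : Tendsto (fun χ : ℝ => ((1 : Matrix (Fin n) (Fin n) ℝ) + χ • W)⁻¹) atTop
      (nhds 0) := by
    have hcomp : Tendsto (fun χ : ℝ => χ⁻¹ • g χ⁻¹) atTop (nhds 0) := by
      have := h0.comp tendsto_inv_atTop_zero
      exact this
    exact Filter.Tendsto.congr' (hev.mono fun _ h => h.symm) hcomp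
  have hvec : Tendsto (fun χ : ℝ => (((1 : Matrix (Fin n) (Fin n) ℝ) + χ • W)⁻¹) *ᵥ we)
      atTop (nhds 0) := by
    have hc : Continuous (fun M : Matrix (Fin n) (Fin n) ℝ => M *ᵥ we) :=
      continuous_id.matrix_mulVec continuous_const
    have := (hc.tendsto 0).comp hinv
    simpa [Function.comp_def] using this
  have hgoal : Tendsto (fun χ : ℝ => -we + (((1 : Matrix (Fin n) (Fin n) ℝ) + χ • W)⁻¹) *ᵥ we)
      atTop (nhds (-we)) := by
    simpa using tendsto_const_nhds.add hvec
  have heq : ∀ᶠ χ : ℝ in atTop,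
      -we + (((1 : Matrix (Fin n) (Fin n) ℝ) + χ • W)⁻¹) *ᵥ we
        = (-χ) • W.mulVec ((((1 : Matrix (Fin n) (Fin n) ℝ) + χ • W)⁻¹).mulVec we) := by
    filter_upwards [eventually_gt_atTop (0:ℝ)] with χ hχ
    set A := (1 : Matrix (Fin n) (Fin n) ℝ) + χ • W with hA_def
    have hB : (χ⁻¹ • (1 : Matrix (Fin n) (Fin n) ℝ) + W).PosDef :=
      aux_posdef hsymm hpd (le_of_lt (inv_pos.mpr hχ))
    have hfac : A = χ • (χ⁻¹ • (1 : Matrix (Fin n) (Fin n) ℝ) + W) := by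
      rw [hA_def, smul_add, smul_smul, mul_inv_cancel₀ hχ.ne', one_smul]
    have hAdet : IsUnit A.det := by
      rw [hfac, Matrix.det_smul]
      exact (IsUnit.pow _ (Ne.isUnit hχ.ne')).mul hB.det_pos.ne'.isUnit
    have hAinv : A * A⁻¹ = 1 := Matrix.mul_nonsing_inv A hAdet
    have key : A *ᵥ (A⁻¹ *ᵥ we) = we := by
      rw [Matrix.mulVec_mulVec, hAinv, Matrix.one_mulVec]
    have hWA : χ • W = A - 1 := by
      rw [hA_def]; exact (add_sub_cancel_left _ _).symm
    show -we + A⁻¹ *ᵥ we = (-χ) • W *ᵥ (A⁻¹ *ᵥ we)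
    rw [neg_smul, ← Matrix.smul_mulVec, hWA, Matrix.sub_mulVec, Matrix.one_mulVec,
      key, neg_sub]
    abel
  exact hgoal.congr' heq
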